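/- Let t ≥ 4, m = t−2, n = 6m+1, and let G be the circulant graph on ℤ/nℤ with distance set {m} ∪ [2m+1, 3m]. Then G contains no independent set of size t = m+2. -/

import Mathlib

/-- The cyclic distance ‖x‖ = min(x mod n, n − (x mod n)) for x ∈ ℤ/nℤ. -/
def cyclicDist (n : ℕ) (x : ZMod n) : ℕ := min x.val (n - x.val)

/-- The circulant graph on `ZMod n` with distance set `S`: `x ~ y` iff `‖x - y‖ ∈ S`. -/
def circ (n : ℕ) (S : Set ℕ) : SimpleGraph (ZMod n) :=
  SimpleGraph.fromRel (fun x y => cyclicDist n (x - y) ∈ S)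

/-- `G` is `R(s,t)`-good: no clique of size `s` and no independent set of size `t`. -/
def RGood {V : Type*} (s t : ℕ) (G : SimpleGraph V) : Prop :=
  G.CliqueFree s ∧ Gᶜ.CliqueFree t

/-- `G` is doubly saturated `R(s,t)`-good. -/
def DoublySaturated {V : Type*} (s t : ℕ) (G : SimpleGraph V) : Prop :=
  RGood s t G ∧
  (∀ u v : V, u ≠ v → ¬ G.Adj u v → ¬ (G ⊔ SimpleGraph.edge u v).CliqueFree s) ∧
  (∀ u v : V, G.Adj u v → ¬ ((G.deleteEdges {s(u, v)})ᶜ.CliqueFree t)) ∧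
  G ≠ ⊤ ∧ Gᶜ ≠ ⊤

/-- A subset of `[0, 2m] \ {m}` with no two elements at distance `m` has at most `m`
elements besides (possibly) `2m`. -/
lemma eraseCard (m : ℕ) (hm : 1 ≤ m) (U : Finset ℕ)
    (hU : ∀ u ∈ U, u ≤ 2*m ∧ u ≠ m)
    (hdiff : ∀ x ∈ U, ∀ y ∈ U, x < y → y - x ≠ m) :
    (U.erase (2*m)).card ≤ m := by
  have key : ∀ x ∈ U.erase (2*m), ∀ y ∈ U.erase (2*m), x < y → x % m = y % m → False := by
    intro x hx y hy hlt hmod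
    have hxU := Finset.mem_of_mem_erase hx
    have hyU := Finset.mem_of_mem_erase hy
    have hx2 := Finset.ne_of_mem_erase hx
    have hy2 := Finset.ne_of_mem_erase hy
    obtain ⟨hxle, hxm⟩ := hU x hxU
    obtain ⟨hyle, hym⟩ := hU y hyU
    have hdvd : m ∣ y - x := (Nat.modEq_iff_dvd' hlt.le).mp hmod
    obtain ⟨c, hc⟩ := hdvd
    have hc2 : c < 2 := by
      by_contra hc2
      push_neg at hc2
      have : m * 2 ≤ m * c := Nat.mul_le_mul_left m hc2
      omega
    interval_cases c <;> first
      | omega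
      | (exact hdiff x hxU y hyU hlt (by omega))
  calc (U.erase (2*m)).card ≤ (Finset.range m).card := by
        apply Finset.card_le_card_of_injOn (fun u => u % m)
        · intro u hu
          simp only [Finset.mem_range]
          exact Finset.mem_coe.mpr (Finset.mem_range.mpr (Nat.mod_lt _ hm))
        · intro x hx y hy hxy
          rcases Nat.lt_trichotomy x y with h | h | h
          · exact absurd (key x hx y hy h hxy) (by simp)
          · exact h
          · exact absurd (key y hy x hx h hxy.symm) (by simp)
    _ = m := Finset.card_range m

/-- Core combinatorial lemma: there is no `(m+2)`-subset of `[0, 6m]` containing `0`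
all of whose pairwise differences avoid `{m, 5m+1} ∪ [2m+1, 4m]`. -/
lemma mainNat (m : ℕ) (hm : 2 ≤ m) (B : Finset ℕ)
    (hB0 : 0 ∈ B) (hBle : ∀ b ∈ B, b ≤ 6*m)
    (hcard : B.card = m + 2)
    (hpair : ∀ x ∈ B, ∀ y ∈ B, x < y →
      y - x ≠ m ∧ y - x ≠ 5*m+1 ∧ ¬(2*m+1 ≤ y - x ∧ y - x ≤ 4*m)) :
    False := by
  have hval : ∀ b ∈ B, b = 0 ∨ (1 ≤ b ∧ b ≤ 2*m ∧ b ≠ m) ∨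
      (4*m+1 ≤ b ∧ b ≤ 6*m ∧ b ≠ 5*m+1) := by
    intro b hb
    rcases Nat.eq_zero_or_pos b with h0 | hpos
    · exact Or.inl h0
    · have h1 := hpair 0 hB0 b hb hpos
      have h2 := hBle b hb
      omega
  classical
  set L := B.filter (fun b => b ≤ 2*m) with hLdef
  set R := B.filter (fun b => ¬ b ≤ 2*m) with hRdef
  set I := R.image (fun y => y - (4*m+1)) with hIdef
  have hmemL : ∀ x ∈ L, x ∈ B ∧ x ≤ 2*m ∧ x ≠ m := by
    intro x hx
    rw [hLdef, Finset.mem_filter] at hx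
    have := hval x hx.1
    refine ⟨hx.1, hx.2, by omega⟩
  have hmemR : ∀ x ∈ R, x ∈ B ∧ 4*m+1 ≤ x ∧ x ≤ 6*m ∧ x ≠ 5*m+1 := by
    intro x hx
    rw [hRdef, Finset.mem_filter] at hx
    have := hval x hx.1
    refine ⟨hx.1, by omega, by omega, by omega⟩
  have hmemI : ∀ v ∈ I, ∃ y ∈ B, 4*m+1 ≤ y ∧ y ≤ 6*m ∧ y ≠ 5*m+1 ∧ v = y - (4*m+1) := by
    intro v hv
    rw [hIdef] at hv
    obtain ⟨y, hy, rfl⟩ := Finset.mem_image.mp hv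
    have := hmemR y hy
    exact ⟨y, this.1, this.2.1, this.2.2.1, this.2.2.2, rfl⟩
  have hLR : L.card + R.card = m + 2 := by
    rw [hLdef, hRdef, Finset.card_filter_add_card_filter_not, hcard]
  have hIcard : I.card = R.card := by
    rw [hIdef]
    apply Finset.card_image_of_injOn
    intro x hx y hy hxy
    have h1 := hmemR x hx
    have h2 := hmemR y hy
    simp only at hxy
    omega
  have hk1 : (L ∩ I).card ≤ 1 := by
    by_contra hk
    push_neg at hk
    obtain ⟨v, hv, w, hw, hvw⟩ := Finset.one_lt_card.mp hk
    have key2 : ∀ a b, a ∈ L ∩ I → b ∈ L ∩ I → a < b → False := by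
      intro a b ha hb hab
      rw [Finset.mem_inter] at ha hb
      obtain ⟨ya, hya, hya1, hya2, hya3, hya4⟩ := hmemI a ha.2
      have hbL := hmemL b hb.1
      have := hpair b hbL.1 ya hya (by omega)
      omega
    rcases Nat.lt_trichotomy v w with h | h | h
    · exact key2 v w hv hw h
    · exact hvw h
    · exact key2 w v hw hv h
  have hUmem : ∀ u ∈ L ∪ I, u ≤ 2*m ∧ u ≠ m := by
    intro u hu
    rcases Finset.mem_union.mp hu with h | h
    · have := hmemL u h; exact ⟨this.2.1, this.2.2⟩
    · obtain ⟨y, hy, h1, h2, h3, rfl⟩ := hmemI u h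
      omega
  have hUdiff : ∀ x ∈ L ∪ I, ∀ y ∈ L ∪ I, x < y → y - x ≠ m := by
    intro x hx y hy hlt heq
    rcases Finset.mem_union.mp hx with h1 | h1 <;> rcases Finset.mem_union.mp hy with h2 | h2
    · have hx' := hmemL x h1; have hy' := hmemL y h2
      exact (hpair x hx'.1 y hy'.1 hlt).1 heq
    · have hx' := hmemL x h1
      obtain ⟨b, hb, hb1, hb2, hb3, rfl⟩ := hmemI y h2
      have := hpair x hx'.1 b hb (by omega)
      omega
    · obtain ⟨a, ha, ha1, ha2, ha3, rfl⟩ := hmemI x h1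
      have hy' := hmemL y h2
      have := hpair y hy'.1 a ha (by omega)
      omega
    · obtain ⟨a, ha, ha1, ha2, ha3, rfl⟩ := hmemI x h1
      obtain ⟨b, hb, hb1, hb2, hb3, rfl⟩ := hmemI y h2
      have := hpair a ha b hb (by omega)
      omega
  have hErase := eraseCard m (by omega) (L ∪ I) hUmem hUdiff
  have hcardU : (L ∪ I).card + (L ∩ I).card = L.card + I.card :=
    Finset.card_union_add_card_inter L I
  by_cases h2m : 2*m ∈ L ∪ I
  · have hUcard : (L ∪ I).card ≤ m + 1 := by
      have := Finset.card_erase_add_one h2m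
      omega
    have hk : (L ∩ I).card = 1 := by omega
    have h2mL : 2*m ∈ L := by
      rcases Finset.mem_union.mp h2m with h | h
      · exact h
      · obtain ⟨y, hy, h1, h2, h3, heq⟩ := hmemI (2*m) h
        omega
    obtain ⟨v, hv⟩ := Finset.card_pos.mp (by omega : 0 < (L ∩ I).card)
    rw [Finset.mem_inter] at hv
    obtain ⟨y, hy, h1, h2, h3, rfl⟩ := hmemI v hv.2
    have h2mB := (hmemL (2*m) h2mL).1
    have := hpair (2*m) h2mB y hy (by omega)
    omega
  · rw [Finset.erase_eq_of_notMem h2m] at hErase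
    omega

theorem stmt_2 (t m n : ℕ) (ht : 4 ≤ t) (hm : m = t - 2) (hn : n = 6 * m + 1) :
    (circ n ({m} ∪ Set.Icc (2 * m + 1) (3 * m)))ᶜ.CliqueFree (m + 2) := by
  have hm2 : 2 ≤ m := by omega
  intro s hs
  haveI : NeZero n := ⟨by omega⟩
  obtain ⟨hclique, hcard⟩ := hs
  obtain ⟨a₀, ha₀⟩ := Finset.card_pos.mp (by omega : 0 < s.card)
  classical
  set f : ZMod n → ℕ := fun u => (u - a₀).val with hf
  have hfinj : Set.InjOn f s := by
    intro u _ v _ h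
    have h2 : u - a₀ = v - a₀ := ZMod.val_injective n h
    have := congrArg (fun z => z + a₀) h2
    simpa using this
  set B := s.image f with hB
  have hcardB : B.card = m + 2 := by
    rw [hB, Finset.card_image_of_injOn hfinj, hcard]
  have hB0 : 0 ∈ B := Finset.mem_image.mpr ⟨a₀, ha₀, by simp [hf]⟩
  have hBle : ∀ b ∈ B, b ≤ 6*m := by
    intro b hb
    obtain ⟨u, hu, rfl⟩ := Finset.mem_image.mp hb
    have := ZMod.val_lt (u - a₀)
    simp only [hf]
    omega
  apply mainNat m hm2 B hB0 hBle hcardB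
  intro x hx y hy hxy
  obtain ⟨u, hu, rfl⟩ := Finset.mem_image.mp hx
  obtain ⟨v, hv, rfl⟩ := Finset.mem_image.mp hy
  have huv : u ≠ v := by
    rintro rfl; omega
  have hadj := hclique hu hv huv
  rw [SimpleGraph.compl_adj, circ, SimpleGraph.fromRel_adj] at hadj
  obtain ⟨-, hnadj⟩ := hadj
  push_neg at hnadj
  have hforb := (hnadj huv).2
  have hylt : f v < n := ZMod.val_lt _
  have hvu : v - u = (((f v - f u : ℕ)) : ZMod n) := by
    rw [Nat.cast_sub hxy.le]
    simp only [hf, ZMod.natCast_val, ZMod.cast_id]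
    ring
  have hval : (v - u).val = f v - f u := by
    rw [hvu, ZMod.val_cast_of_lt (by omega)]
  rw [cyclicDist, hval] at hforb
  simp only [Set.mem_union, Set.mem_singleton_iff, Set.mem_Icc, not_or, not_and] at hforb
  omega
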